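/- Let θ₀ ∈ L²(0,1) with cosine coefficients (c_n) and τ > 0. Define y_i := √2 (-π²)^i ∑_{n≥0} c_n e^{-n²π²τ} n^{2i}. Then there is a constant C depending only on θ₀ such that |y_i| ≤ C (1 + 1/√τ) · i!/τ^i for all i ≥ 0. -/

import Mathlib

open Real

/-- For `z ≥ 0`, `z ^ i * exp (-z) ≤ i ^ i * exp (-i)`. -/
private lemma aux_pow_exp (i : ℕ) (z : ℝ) (hz : 0 ≤ z) :
    z ^ i * Real.exp (-z) ≤ (i : ℝ) ^ i * Real.exp (-(i : ℝ)) := by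
  rcases Nat.eq_zero_or_pos i with hi | hi
  · subst hi
    simpa using Real.exp_le_one_iff.mpr (by linarith : -z ≤ 0)
  · have hipos : (0 : ℝ) < i := by exact_mod_cast hi
    have h1 : z / i ≤ Real.exp (z / i - 1) := by
      have := Real.add_one_le_exp (z / i - 1); linarith
    have h2 : z ≤ (i : ℝ) * Real.exp (z / i - 1) := by
      have := mul_le_mul_of_nonneg_left h1 hipos.le
      rwa [mul_div_cancel₀ _ hipos.ne'] at this
    have h3 : z ^ i ≤ ((i : ℝ) * Real.exp (z / i - 1)) ^ i :=
      pow_le_pow_left₀ hz h2 i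
    have h4 : ((i : ℝ) * Real.exp (z / i - 1)) ^ i = (i : ℝ) ^ i * Real.exp (z - i) := by
      rw [mul_pow, ← Real.exp_nat_mul]
      congr 1
      have hne : (i : ℝ) ≠ 0 := hipos.ne'
      field_simp
    have h5 : z ^ i * Real.exp (-z) ≤ (i : ℝ) ^ i * Real.exp (z - i) * Real.exp (-z) := by
      apply mul_le_mul_of_nonneg_right _ (Real.exp_pos _).le
      rw [← h4]; exact h3
    calc z ^ i * Real.exp (-z) ≤ (i : ℝ) ^ i * Real.exp (z - i) * Real.exp (-z) := h5
      _ = (i : ℝ) ^ i * Real.exp (-(i : ℝ)) := by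
          rw [mul_assoc, ← Real.exp_add]; ring_nf

/-- For `y ≥ 0`, `y ^ i * exp (-y) ≤ e * (i ^ i * exp (-i)) * exp (-(y / (i + 1)))`. -/
private lemma aux_pow_exp' (i : ℕ) (y : ℝ) (hy : 0 ≤ y) :
    y ^ i * Real.exp (-y) ≤
      Real.exp 1 * ((i : ℝ) ^ i * Real.exp (-(i : ℝ))) * Real.exp (-(y / ((i : ℝ) + 1))) := by
  rcases Nat.eq_zero_or_pos i with hi | hi
  · subst hi
    simp only [pow_zero, one_mul, Nat.cast_zero, neg_zero, Real.exp_zero, mul_one, zero_add,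
      div_one]
    nlinarith [Real.exp_pos (-y), Real.add_one_le_exp (1 : ℝ)]
  · have hipos : (0 : ℝ) < i := by exact_mod_cast hi
    have hi1 : (0 : ℝ) < (i : ℝ) + 1 := by positivity
    set c : ℝ := i / ((i : ℝ) + 1) with hc
    have hcpos : 0 < c := by positivity
    have h := aux_pow_exp i (c * y) (by positivity)
    have hsplit : Real.exp (-y) = Real.exp (-(c * y)) * Real.exp (-(y / ((i : ℝ) + 1))) := by
      rw [← Real.exp_add]
      congr 1
      rw [hc]
      field_simp
      ring
    have hcne : c ^ i ≠ 0 := by positivity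
    have hfin : y ^ i * Real.exp (-y)
        = ((c * y) ^ i * Real.exp (-(c * y))) * Real.exp (-(y / ((i : ℝ) + 1))) * (c ^ i)⁻¹ := by
      rw [hsplit, mul_pow]
      field_simp
    have hcinv : (c ^ i)⁻¹ ≤ Real.exp 1 := by
      rw [← inv_pow]
      have h1 : c⁻¹ = 1 + 1 / (i : ℝ) := by
        rw [hc]
        field_simp
      have h2 : c⁻¹ ≤ Real.exp (1 / (i : ℝ)) := by
        rw [h1]
        have := Real.add_one_le_exp (1 / (i : ℝ)); linarith
      have h3 : c⁻¹ ^ i ≤ Real.exp (1 / (i : ℝ)) ^ i :=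
        pow_le_pow_left₀ (by positivity) h2 i
      calc c⁻¹ ^ i ≤ Real.exp (1 / (i : ℝ)) ^ i := h3
        _ = Real.exp ((i : ℝ) * (1 / (i : ℝ))) := (Real.exp_nat_mul _ i).symm
        _ = Real.exp 1 := by rw [mul_one_div, div_self hipos.ne']
    calc y ^ i * Real.exp (-y)
        = ((c * y) ^ i * Real.exp (-(c * y))) * Real.exp (-(y / ((i : ℝ) + 1))) * (c ^ i)⁻¹ :=
          hfin
      _ ≤ ((i : ℝ) ^ i * Real.exp (-(i : ℝ))) * Real.exp (-(y / ((i : ℝ) + 1))) * (c ^ i)⁻¹ := by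
          apply mul_le_mul_of_nonneg_right _ (by positivity)
          exact mul_le_mul_of_nonneg_right h (Real.exp_pos _).le
      _ ≤ ((i : ℝ) ^ i * Real.exp (-(i : ℝ))) * Real.exp (-(y / ((i : ℝ) + 1))) * Real.exp 1 := by
          apply mul_le_mul_of_nonneg_left hcinv (by positivity)
      _ = Real.exp 1 * ((i : ℝ) ^ i * Real.exp (-(i : ℝ)))
            * Real.exp (-(y / ((i : ℝ) + 1))) := by ring

/-- Stirling-type lower bound consequences. -/
private lemma aux_stirling (i : ℕ) (hi : 1 ≤ i) :
    Real.sqrt (2 * i) * ((i : ℝ) / Real.exp 1) ^ i ≤ (i.factorial : ℝ) := by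
  have htend : Filter.Tendsto (Stirling.stirlingSeq ∘ Nat.succ) Filter.atTop
      (nhds (Real.sqrt π)) :=
    Stirling.tendsto_stirlingSeq_sqrt_pi.comp (Filter.tendsto_add_atTop_nat 1)
  have hmono := Stirling.stirlingSeq'_antitone
  have hge : Real.sqrt π ≤ Stirling.stirlingSeq i := by
    have h := hmono.le_of_tendsto htend (i - 1)
    simp only [Function.comp_apply, Nat.succ_eq_add_one] at h
    rwa [show i - 1 + 1 = i by omega] at h
  have hπ : (1 : ℝ) ≤ Real.sqrt π := by
    rw [show (1 : ℝ) = Real.sqrt 1 by simp]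
    exact Real.sqrt_le_sqrt (by linarith [Real.pi_gt_three])
  have hone : (1 : ℝ) ≤ Stirling.stirlingSeq i := le_trans hπ hge
  have hipos : (0 : ℝ) < i := by exact_mod_cast hi
  have hdpos : 0 < Real.sqrt (2 * i) * ((i : ℝ) / Real.exp 1) ^ i := by positivity
  have := (one_le_div hdpos).mp (by rwa [Stirling.stirlingSeq] at hone)
  linarith

private lemma aux_fact1 (i : ℕ) : (i : ℝ) ^ i * Real.exp (-(i : ℝ)) ≤ (i.factorial : ℝ) := by
  rcases Nat.eq_zero_or_pos i with hi | hi
  · subst hi; simp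
  · have h := aux_stirling i hi
    have hipos : (0 : ℝ) < i := by exact_mod_cast hi
    have heq : ((i : ℝ) / Real.exp 1) ^ i = (i : ℝ) ^ i * Real.exp (-(i : ℝ)) := by
      rw [div_pow, ← Real.exp_nat_mul, mul_one, Real.exp_neg, div_eq_mul_inv]
    have hsq : (1 : ℝ) ≤ Real.sqrt (2 * i) := by
      rw [show (1 : ℝ) = Real.sqrt 1 by simp]
      apply Real.sqrt_le_sqrt
      have : (1 : ℝ) ≤ (i : ℝ) := by exact_mod_cast hi
      linarith
    nlinarith [pow_nonneg (div_nonneg hipos.le (Real.exp_pos 1).le) i]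

private lemma aux_fact2 (i : ℕ) :
    (i : ℝ) ^ i * Real.exp (-(i : ℝ)) * Real.sqrt ((i : ℝ) + 1) ≤ 2 * (i.factorial : ℝ) := by
  rcases Nat.eq_zero_or_pos i with hi | hi
  · subst hi; norm_num
  · have h := aux_stirling i hi
    have hipos : (0 : ℝ) < i := by exact_mod_cast hi
    have heq : ((i : ℝ) / Real.exp 1) ^ i = (i : ℝ) ^ i * Real.exp (-(i : ℝ)) := by
      rw [div_pow, ← Real.exp_nat_mul, mul_one, Real.exp_neg, div_eq_mul_inv]
    have hsq : Real.sqrt ((i : ℝ) + 1) ≤ Real.sqrt (2 * i) := by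
      apply Real.sqrt_le_sqrt
      have : (1 : ℝ) ≤ (i : ℝ) := by exact_mod_cast hi
      linarith
    have hfac : (0 : ℝ) ≤ (i.factorial : ℝ) := by positivity
    nlinarith [pow_nonneg (div_nonneg hipos.le (Real.exp_pos 1).le) i,
      Real.sqrt_nonneg ((i : ℝ) + 1)]

/-- Summability and bound for `∑ exp (-a n²)`. -/
private lemma aux_gauss_sum (a : ℝ) (ha : 0 < a) :
    Summable (fun n : ℕ => Real.exp (-a * (n : ℝ) ^ 2)) ∧
    ∑' n : ℕ, Real.exp (-a * (n : ℝ) ^ 2) ≤ Real.exp 1 * (1 + 1 / Real.sqrt a) := by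
  have hsa : 0 < Real.sqrt a := Real.sqrt_pos.mpr ha
  have hsq : Real.sqrt a ^ 2 = a := Real.sq_sqrt ha.le
  have hr0 : (0 : ℝ) ≤ Real.exp (-Real.sqrt a) := (Real.exp_pos _).le
  have hr1 : Real.exp (-Real.sqrt a) < 1 := Real.exp_lt_one_iff.mpr (by linarith)
  have hbound : ∀ n : ℕ,
      Real.exp (-a * (n : ℝ) ^ 2) ≤ Real.exp 1 * Real.exp (-Real.sqrt a) ^ n := by
    intro n
    have ht : (n : ℝ) * Real.sqrt a ≤ 1 + a * (n : ℝ) ^ 2 := by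
      nlinarith [sq_nonneg ((n : ℝ) * Real.sqrt a - 1), sq_nonneg ((n : ℝ) * Real.sqrt a)]
    calc Real.exp (-a * (n : ℝ) ^ 2) ≤ Real.exp (1 - (n : ℝ) * Real.sqrt a) := by
          apply Real.exp_le_exp.mpr; linarith
      _ = Real.exp 1 * Real.exp (-Real.sqrt a) ^ n := by
          rw [← Real.exp_nat_mul, ← Real.exp_add]; ring_nf
  have hgeom : Summable (fun n : ℕ => Real.exp 1 * Real.exp (-Real.sqrt a) ^ n) :=
    (summable_geometric_of_lt_one hr0 hr1).mul_left _
  have hsum : Summable (fun n : ℕ => Real.exp (-a * (n : ℝ) ^ 2)) :=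
    Summable.of_nonneg_of_le (fun n => (Real.exp_pos _).le) hbound hgeom
  refine ⟨hsum, ?_⟩
  have h1 : ∑' n : ℕ, Real.exp (-a * (n : ℝ) ^ 2)
      ≤ ∑' n : ℕ, Real.exp 1 * Real.exp (-Real.sqrt a) ^ n :=
    Summable.tsum_le_tsum hbound hsum hgeom
  have h2 : ∑' n : ℕ, Real.exp 1 * Real.exp (-Real.sqrt a) ^ n
      = Real.exp 1 * (1 - Real.exp (-Real.sqrt a))⁻¹ := by
    rw [tsum_mul_left, tsum_geometric_of_lt_one hr0 hr1]
  have h3 : (1 - Real.exp (-Real.sqrt a))⁻¹ ≤ 1 + 1 / Real.sqrt a := by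
    have he : Real.exp (-Real.sqrt a) ≤ (1 + Real.sqrt a)⁻¹ := by
      rw [Real.exp_neg]
      apply inv_anti₀ (by positivity)
      have := Real.add_one_le_exp (Real.sqrt a); linarith
    have hpos : 0 < 1 - Real.exp (-Real.sqrt a) := by linarith
    have hge : Real.sqrt a / (1 + Real.sqrt a) ≤ 1 - Real.exp (-Real.sqrt a) := by
      have h4 : Real.sqrt a / (1 + Real.sqrt a) = 1 - (1 + Real.sqrt a)⁻¹ := by
        field_simp
        ring
      linarith
    calc (1 - Real.exp (-Real.sqrt a))⁻¹ ≤ (Real.sqrt a / (1 + Real.sqrt a))⁻¹ :=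
          inv_anti₀ (by positivity) hge
      _ = (1 + Real.sqrt a) / Real.sqrt a := by rw [inv_div]
      _ = 1 + 1 / Real.sqrt a := by field_simp [add_comm]; ring
  calc ∑' n : ℕ, Real.exp (-a * (n : ℝ) ^ 2)
      ≤ Real.exp 1 * (1 - Real.exp (-Real.sqrt a))⁻¹ := h1.trans (le_of_eq h2)
    _ ≤ Real.exp 1 * (1 + 1 / Real.sqrt a) :=
        mul_le_mul_of_nonneg_left h3 (Real.exp_pos 1).le

/-- The key estimate. -/
private lemma aux_key (τ : ℝ) (hτ : 0 < τ) (i : ℕ) :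
    Summable (fun n : ℕ => Real.exp (-(n : ℝ) ^ 2 * Real.pi ^ 2 * τ) * (n : ℝ) ^ (2 * i)) ∧
    (Real.pi ^ 2) ^ i *
        ∑' n : ℕ, Real.exp (-(n : ℝ) ^ 2 * Real.pi ^ 2 * τ) * (n : ℝ) ^ (2 * i)
      ≤ 2 * Real.exp 1 ^ 2 * (1 + 1 / Real.sqrt τ) * (i.factorial : ℝ) / τ ^ i := by
  have hπ : (0 : ℝ) < π := Real.pi_pos
  have hπ1 : (1 : ℝ) ≤ π := by linarith [Real.pi_gt_three]
  -- summability of the main series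
  have hg : Summable (fun n : ℕ =>
      Real.exp (-(n : ℝ) ^ 2 * Real.pi ^ 2 * τ) * (n : ℝ) ^ (2 * i)) := by
    have hr1 : ‖Real.exp (-(π ^ 2 * τ))‖ < 1 := by
      rw [Real.norm_eq_abs, abs_of_pos (Real.exp_pos _)]
      apply Real.exp_lt_one_iff.mpr
      have : (0 : ℝ) < π ^ 2 * τ := by positivity
      linarith
    have hmaj := summable_pow_mul_geometric_of_norm_lt_one (2 * i) hr1
    apply Summable.of_nonneg_of_le (fun n => by positivity) _ hmaj
    intro n
    have hnn : (n : ℝ) ≤ (n : ℝ) ^ 2 := by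
      rcases Nat.eq_zero_or_pos n with hn | hn
      · subst hn; norm_num
      · have h1 : (1 : ℝ) ≤ (n : ℝ) := by exact_mod_cast hn
        nlinarith
    have hexp : Real.exp (-(n : ℝ) ^ 2 * Real.pi ^ 2 * τ) ≤ Real.exp (-(π ^ 2 * τ)) ^ n := by
      rw [← Real.exp_nat_mul]
      apply Real.exp_le_exp.mpr
      have hpt : (0 : ℝ) ≤ π ^ 2 * τ := by positivity
      nlinarith [mul_le_mul_of_nonneg_right hnn hpt]
    calc Real.exp (-(n : ℝ) ^ 2 * Real.pi ^ 2 * τ) * (n : ℝ) ^ (2 * i)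
        ≤ Real.exp (-(π ^ 2 * τ)) ^ n * (n : ℝ) ^ (2 * i) :=
          mul_le_mul_of_nonneg_right hexp (by positivity)
      _ = (n : ℝ) ^ (2 * i) * Real.exp (-(π ^ 2 * τ)) ^ n := by ring
  refine ⟨hg, ?_⟩
  -- the parameters
  set a : ℝ := π ^ 2 * τ / ((i : ℝ) + 1) with ha
  have hapos : 0 < a := by positivity
  set M : ℝ := (i : ℝ) ^ i * Real.exp (-(i : ℝ)) with hM
  have hMpos : 0 < M := by
    rcases Nat.eq_zero_or_pos i with h0 | h0
    · subst h0; rw [hM]; norm_num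
    · have : (0 : ℝ) < (i : ℝ) := by exact_mod_cast h0
      positivity
  set D : ℝ := Real.exp 1 * M / τ ^ i with hD
  have hDpos : 0 < D := by positivity
  -- termwise bound
  have hterm : ∀ n : ℕ,
      (Real.pi ^ 2) ^ i * (Real.exp (-(n : ℝ) ^ 2 * Real.pi ^ 2 * τ) * (n : ℝ) ^ (2 * i))
        ≤ D * Real.exp (-a * (n : ℝ) ^ 2) := by
    intro n
    have hy : (0 : ℝ) ≤ (n : ℝ) ^ 2 * π ^ 2 * τ := by positivity
    have E := aux_pow_exp' i ((n : ℝ) ^ 2 * π ^ 2 * τ) hy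
    have harg : -(n : ℝ) ^ 2 * Real.pi ^ 2 * τ = -((n : ℝ) ^ 2 * π ^ 2 * τ) := by ring
    have harg2 : ((n : ℝ) ^ 2 * π ^ 2 * τ) / ((i : ℝ) + 1) = a * (n : ℝ) ^ 2 := by
      rw [ha]; ring
    have hypow : ((n : ℝ) ^ 2 * π ^ 2 * τ) ^ i
        = (n : ℝ) ^ (2 * i) * (Real.pi ^ 2) ^ i * τ ^ i := by
      rw [mul_pow, mul_pow, pow_mul]
    rw [hD, div_mul_eq_mul_div, le_div_iff₀ (pow_pos hτ i)]
    calc (Real.pi ^ 2) ^ i * (Real.exp (-(n : ℝ) ^ 2 * Real.pi ^ 2 * τ) * (n : ℝ) ^ (2 * i))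
          * τ ^ i
        = ((n : ℝ) ^ 2 * π ^ 2 * τ) ^ i * Real.exp (-((n : ℝ) ^ 2 * π ^ 2 * τ)) := by
          rw [hypow, harg]; ring
      _ ≤ Real.exp 1 * M * Real.exp (-(((n : ℝ) ^ 2 * π ^ 2 * τ) / ((i : ℝ) + 1))) := E
      _ = Real.exp 1 * M * Real.exp (-a * (n : ℝ) ^ 2) := by
          rw [harg2, neg_mul]
  obtain ⟨hgsum, hgbound⟩ := aux_gauss_sum a hapos
  -- sum the termwise bound
  have hsum1 : (Real.pi ^ 2) ^ i *
      ∑' n : ℕ, Real.exp (-(n : ℝ) ^ 2 * Real.pi ^ 2 * τ) * (n : ℝ) ^ (2 * i)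
      ≤ D * ∑' n : ℕ, Real.exp (-a * (n : ℝ) ^ 2) := by
    rw [← tsum_mul_left, ← tsum_mul_left]
    exact Summable.tsum_le_tsum hterm (hg.mul_left _) (hgsum.mul_left _)
  -- bound 1/√a
  have hsa : 0 < Real.sqrt a := Real.sqrt_pos.mpr hapos
  have hsτ : 0 < Real.sqrt τ := Real.sqrt_pos.mpr hτ
  have hia : Real.sqrt ((i : ℝ) + 1) * Real.sqrt a = Real.sqrt (((i : ℝ) + 1) * a) :=
    (Real.sqrt_mul (by positivity) _).symm
  have hia2 : ((i : ℝ) + 1) * a = π ^ 2 * τ := by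
    rw [ha]; field_simp
  have hπτ : Real.sqrt (π ^ 2 * τ) = π * Real.sqrt τ := by
    rw [Real.sqrt_mul (by positivity), Real.sqrt_sq hπ.le]
  have hkey2 : Real.sqrt τ ≤ Real.sqrt ((i : ℝ) + 1) * Real.sqrt a := by
    calc Real.sqrt τ ≤ π * Real.sqrt τ := le_mul_of_one_le_left hsτ.le hπ1
      _ = Real.sqrt (π ^ 2 * τ) := hπτ.symm
      _ = Real.sqrt (((i : ℝ) + 1) * a) := by rw [hia2]
      _ = Real.sqrt ((i : ℝ) + 1) * Real.sqrt a := hia.symm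
  have hinva : 1 / Real.sqrt a ≤ Real.sqrt ((i : ℝ) + 1) * (1 / Real.sqrt τ) := by
    rw [mul_one_div, div_le_div_iff₀ hsa hsτ, one_mul]
    exact hkey2
  -- final arithmetic
  have hfac1 := aux_fact1 i
  have hfac2 := aux_fact2 i
  have hfinal : D * (Real.exp 1 * (1 + 1 / Real.sqrt a))
      ≤ 2 * Real.exp 1 ^ 2 * (1 + 1 / Real.sqrt τ) * (i.factorial : ℝ) / τ ^ i := by
    rw [hD]
    rw [div_mul_eq_mul_div, div_le_div_iff₀ (pow_pos hτ i) (pow_pos hτ i)]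
    apply mul_le_mul_of_nonneg_right _ (pow_pos hτ i).le
    have hMa : M * (1 + 1 / Real.sqrt a) ≤ 2 * (1 + 1 / Real.sqrt τ) * (i.factorial : ℝ) := by
      have h1 : M * (1 / Real.sqrt a) ≤ M * (Real.sqrt ((i : ℝ) + 1) * (1 / Real.sqrt τ)) :=
        mul_le_mul_of_nonneg_left hinva hMpos.le
      have h2 : M * Real.sqrt ((i : ℝ) + 1) ≤ 2 * (i.factorial : ℝ) := hfac2
      have h3 : M * (Real.sqrt ((i : ℝ) + 1) * (1 / Real.sqrt τ))
          ≤ 2 * (i.factorial : ℝ) * (1 / Real.sqrt τ) := by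
        rw [← mul_assoc]
        exact mul_le_mul_of_nonneg_right h2 (by positivity)
      have h4 : (0 : ℝ) ≤ 1 / Real.sqrt τ := by positivity
      nlinarith
    calc Real.exp 1 * M * (Real.exp 1 * (1 + 1 / Real.sqrt a))
        = Real.exp 1 ^ 2 * (M * (1 + 1 / Real.sqrt a)) := by ring
      _ ≤ Real.exp 1 ^ 2 * (2 * (1 + 1 / Real.sqrt τ) * (i.factorial : ℝ)) :=
          mul_le_mul_of_nonneg_left hMa (by positivity)
      _ = 2 * Real.exp 1 ^ 2 * (1 + 1 / Real.sqrt τ) * (i.factorial : ℝ) := by ring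
  calc (Real.pi ^ 2) ^ i *
      ∑' n : ℕ, Real.exp (-(n : ℝ) ^ 2 * Real.pi ^ 2 * τ) * (n : ℝ) ^ (2 * i)
      ≤ D * ∑' n : ℕ, Real.exp (-a * (n : ℝ) ^ 2) := hsum1
    _ ≤ D * (Real.exp 1 * (1 + 1 / Real.sqrt a)) :=
        mul_le_mul_of_nonneg_left hgbound hDpos.le
    _ ≤ 2 * Real.exp 1 ^ 2 * (1 + 1 / Real.sqrt τ) * (i.factorial : ℝ) / τ ^ i := hfinal

theorem taylor_coefficients_bound (c : ℕ → ℝ) (hc : Summable fun n => (c n) ^ 2) :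
    ∃ C : ℝ, 0 < C ∧ ∀ τ : ℝ, 0 < τ → ∀ i : ℕ,
      |Real.sqrt 2 * (-Real.pi ^ 2) ^ i *
          ∑' n : ℕ, c n * Real.exp (-(n : ℝ) ^ 2 * Real.pi ^ 2 * τ) * (n : ℝ) ^ (2 * i)|
        ≤ C * (1 + 1 / Real.sqrt τ) * (i.factorial : ℝ) / τ ^ i := by
  set B : ℝ := Real.sqrt (∑' n : ℕ, (c n) ^ 2) with hB
  have hcB : ∀ n : ℕ, |c n| ≤ B := by
    intro n
    have h1 : (c n) ^ 2 ≤ ∑' m : ℕ, (c m) ^ 2 :=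
      Summable.le_tsum hc n fun j _ => sq_nonneg _
    calc |c n| = Real.sqrt ((c n) ^ 2) := (Real.sqrt_sq_eq_abs _).symm
      _ ≤ B := Real.sqrt_le_sqrt h1
  have hB0 : 0 ≤ B := Real.sqrt_nonneg _
  refine ⟨2 * Real.exp 1 ^ 2 * Real.sqrt 2 * (B + 1), by positivity, ?_⟩
  intro τ hτ i
  obtain ⟨hg, hkey⟩ := aux_key τ hτ i
  set g : ℕ → ℝ := fun n => Real.exp (-(n : ℝ) ^ 2 * Real.pi ^ 2 * τ) * (n : ℝ) ^ (2 * i)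
    with hgdef
  set f : ℕ → ℝ := fun n => c n * Real.exp (-(n : ℝ) ^ 2 * Real.pi ^ 2 * τ) * (n : ℝ) ^ (2 * i)
    with hfdef
  have hg0 : ∀ n, 0 ≤ g n := fun n => by positivity
  have habs : ∀ n : ℕ, |f n| ≤ (B + 1) * g n := by
    intro n
    have h1 : |f n| = |c n| * g n := by
      rw [hfdef, hgdef]
      simp only [abs_mul, abs_of_pos (Real.exp_pos _),
        abs_of_nonneg (pow_nonneg (Nat.cast_nonneg n : (0:ℝ) ≤ n) _)]
      ring
    rw [h1]
    apply mul_le_mul_of_nonneg_right _ (hg0 n)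
    linarith [hcB n]
  have habs_sum : Summable fun n => |f n| :=
    Summable.of_nonneg_of_le (fun n => abs_nonneg _) habs (hg.mul_left _)
  have hf_sum : Summable f := habs_sum.of_abs
  have htsum1 : |∑' n : ℕ, f n| ≤ ∑' n : ℕ, |f n| := by
    have := norm_tsum_le_tsum_norm (f := f) (by simpa [Real.norm_eq_abs] using habs_sum)
    simpa [Real.norm_eq_abs] using this
  have htsum2 : ∑' n : ℕ, |f n| ≤ (B + 1) * ∑' n : ℕ, g n := by
    rw [← tsum_mul_left]
    exact Summable.tsum_le_tsum habs habs_sum (hg.mul_left _)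
  have hgt0 : 0 ≤ ∑' n : ℕ, g n := tsum_nonneg hg0
  have habs_coef : |Real.sqrt 2 * (-Real.pi ^ 2) ^ i| = Real.sqrt 2 * (Real.pi ^ 2) ^ i := by
    rw [abs_mul, abs_pow, abs_neg, abs_of_nonneg (Real.sqrt_nonneg _),
      abs_of_nonneg (by positivity : (0:ℝ) ≤ Real.pi ^ 2)]
  have hchain : |Real.sqrt 2 * (-Real.pi ^ 2) ^ i * ∑' n : ℕ, f n|
      ≤ Real.sqrt 2 * (B + 1) * ((Real.pi ^ 2) ^ i * ∑' n : ℕ, g n) := by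
    rw [abs_mul, habs_coef]
    calc Real.sqrt 2 * (Real.pi ^ 2) ^ i * |∑' n : ℕ, f n|
        ≤ Real.sqrt 2 * (Real.pi ^ 2) ^ i * ((B + 1) * ∑' n : ℕ, g n) := by
          apply mul_le_mul_of_nonneg_left (htsum1.trans htsum2) (by positivity)
      _ = Real.sqrt 2 * (B + 1) * ((Real.pi ^ 2) ^ i * ∑' n : ℕ, g n) := by ring
  calc |Real.sqrt 2 * (-Real.pi ^ 2) ^ i * ∑' n : ℕ, f n|
      ≤ Real.sqrt 2 * (B + 1) * ((Real.pi ^ 2) ^ i * ∑' n : ℕ, g n) := hchain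
    _ ≤ Real.sqrt 2 * (B + 1)
        * (2 * Real.exp 1 ^ 2 * (1 + 1 / Real.sqrt τ) * (i.factorial : ℝ) / τ ^ i) :=
        mul_le_mul_of_nonneg_left hkey (by positivity)
    _ = 2 * Real.exp 1 ^ 2 * Real.sqrt 2 * (B + 1) * (1 + 1 / Real.sqrt τ)
        * (i.factorial : ℝ) / τ ^ i := by ring
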